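/- (Remark 5.1) Let Z ⊆ ℤ² be finite and nonempty, and let D = ⋃_{z ∈ Z} Q_z, where Q_z = z + [−1/2, 1/2]² is the closed unit square centered at z. Let x ∈ D satisfy |x| ≥ |y| for all y ∈ D. Then there is exactly one z ∈ Z with x ∈ Q_z, and for this z the point x is a vertex of Q_z, i.e. x − z ∈ {−1/2, 1/2}². -/

import Mathlib

/-- The closed axis-aligned unit square Q_z = z + [−1/2, 1/2]² centered at z ∈ ℤ². -/
def Qsq (z : Fin 2 → ℤ) : Set (EuclideanSpace ℝ (Fin 2)) :=
  {p | ∀ i, |p i - (z i : ℝ)| ≤ 1 / 2}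

lemma norm_lt_of_abs (x y : EuclideanSpace ℝ (Fin 2)) (i : Fin 2)
    (hle : ∀ j, |x j| ≤ |y j|) (hlt : |x i| < |y i|) : ‖x‖ < ‖y‖ := by
  rw [EuclideanSpace.norm_eq, EuclideanSpace.norm_eq]
  apply Real.sqrt_lt_sqrt (by positivity)
  refine Finset.sum_lt_sum (fun j _ => ?_) ⟨i, Finset.mem_univ i, ?_⟩
  · simp only [Real.norm_eq_abs]
    exact pow_le_pow_left₀ (abs_nonneg _) (hle j) 2
  · simp only [Real.norm_eq_abs]
    exact pow_lt_pow_left₀ hlt (abs_nonneg _) two_ne_zero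

/-- Remark 5.1: a point x of maximal norm of a finite union
D = ⋃_{z ∈ Z} Q_z of closed unit squares centered at lattice points lies in exactly one
square Q_z, and is one of its vertices. -/
theorem stmt16 (Z : Finset (Fin 2 → ℤ)) (hZ : Z.Nonempty)
    (x : EuclideanSpace ℝ (Fin 2)) (hx : x ∈ ⋃ z ∈ Z, Qsq z)
    (hmax : ∀ y ∈ ⋃ z ∈ Z, Qsq z, ‖y‖ ≤ ‖x‖) :
    (∃! z : Fin 2 → ℤ, z ∈ Z ∧ x ∈ Qsq z) ∧
    ∀ z ∈ Z, x ∈ Qsq z → ∀ i, x i - (z i : ℝ) = 1 / 2 ∨ x i - (z i : ℝ) = -(1 / 2) := by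
  have habs2 : ∀ c : ℝ, |c + 1/2 - c| ≤ 1/2 := fun c => by
    rw [abs_le]; constructor <;> linarith
  have habs3 : ∀ c : ℝ, |c - 1/2 - c| ≤ 1/2 := fun c => by
    rw [abs_le]; constructor <;> linarith
  -- a perturbed point staying in some square contradicts maximality
  have hpert : ∀ z ∈ Z, ∀ (i : Fin 2) (e : ℝ), |e - (z i : ℝ)| ≤ 1 / 2 →
      (∀ j, |x j - (z j : ℝ)| ≤ 1 / 2 ∨ j = i) → ¬ (|x i| < |e|) := by
    intro z hz i e he hxj hlt
    set y : EuclideanSpace ℝ (Fin 2) := WithLp.toLp 2 (Function.update x.ofLp i e) with hy_def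
    have hyi : y i = e := Function.update_self i e x.ofLp
    have hyj : ∀ j, j ≠ i → y j = x j := fun j hj => Function.update_of_ne hj e x.ofLp
    have hy : y ∈ Qsq z := by
      intro j
      by_cases hj : j = i
      · subst hj; rw [hyi]; exact he
      · rw [hyj j hj]
        rcases hxj j with h | h
        · exact h
        · exact absurd h hj
    have hle : ∀ j, |x j| ≤ |y j| := by
      intro j
      by_cases hj : j = i
      · subst hj; rw [hyi]; exact hlt.le
      · rw [hyj j hj]
    have := hmax y (Set.mem_biUnion hz hy)
    have hgt : ‖x‖ < ‖y‖ := norm_lt_of_abs x y i hle (by rw [hyi]; exact hlt)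
    exact absurd hgt (not_lt.mpr this)
  -- vertex claim
  have hvert : ∀ z ∈ Z, x ∈ Qsq z →
      ∀ i, x i - (z i : ℝ) = 1 / 2 ∨ x i - (z i : ℝ) = -(1 / 2) := by
    intro z hz hxz i
    by_contra hc
    push_neg at hc
    have habs : |x i - (z i : ℝ)| < 1 / 2 := lt_of_le_of_ne (hxz i) (by
      intro h
      rcases abs_eq (by norm_num : (0:ℝ) ≤ 1/2) |>.mp h with h1 | h1
      · exact hc.1 h1
      · exact hc.2 h1)
    have h1 : x i - (z i : ℝ) < 1 / 2 := (abs_lt.mp habs).2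
    have h2 : -(1/2) < x i - (z i : ℝ) := (abs_lt.mp habs).1
    by_cases hs : 0 ≤ x i
    · refine hpert z hz i ((z i : ℝ) + 1/2) (habs2 _) (fun j => ?_) ?_
      · by_cases hj : j = i
        · exact Or.inr hj
        · exact Or.inl (hxz j)
      · have : x i < (z i : ℝ) + 1/2 := by linarith
        rw [abs_of_nonneg hs, abs_of_pos (lt_of_le_of_lt hs this)]
        exact this
    · push_neg at hs
      refine hpert z hz i ((z i : ℝ) - 1/2) (habs3 _) (fun j => ?_) ?_
      · by_cases hj : j = i
        · exact Or.inr hj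
        · exact Or.inl (hxz j)
      · have : (z i : ℝ) - 1/2 < x i := by linarith
        rw [abs_of_neg hs, abs_of_neg (lt_trans this hs)]
        linarith
  -- uniqueness
  obtain ⟨z0, hz0⟩ := Set.mem_iUnion₂.mp hx
  obtain ⟨hz0Z, hxz0⟩ := hz0
  have huniq : ∀ z ∈ Z, x ∈ Qsq z → ∀ z' ∈ Z, x ∈ Qsq z' → z = z' := by
    have hcase : ∀ z ∈ Z, x ∈ Qsq z → ∀ z' ∈ Z, x ∈ Qsq z' → ∀ i,
        x i - (z i : ℝ) = 1/2 → x i - (z' i : ℝ) = -(1/2) → False := by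
      intro z hz hxz z' hz' hxz' i h1 h2
      by_cases hs : 0 ≤ x i
      · refine hpert z' hz' i ((z' i : ℝ) + 1/2) (habs2 _) (fun j => ?_) ?_
        · by_cases hj : j = i
          · exact Or.inr hj
          · exact Or.inl (hxz' j)
        · have he : (z' i : ℝ) + 1/2 = x i + 1 := by linarith
          rw [he, abs_of_nonneg hs, abs_of_nonneg (by linarith)]
          linarith
      · push_neg at hs
        refine hpert z hz i ((z i : ℝ) - 1/2) (habs3 _) (fun j => ?_) ?_
        · by_cases hj : j = i
          · exact Or.inr hj
          · exact Or.inl (hxz j)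
        · have he : (z i : ℝ) - 1/2 = x i - 1 := by linarith
          rw [he, abs_of_neg hs, abs_of_neg (by linarith)]
          linarith
    intro z hz hxz z' hz' hxz'
    funext i
    rcases hvert z hz hxz i with h1 | h1 <;> rcases hvert z' hz' hxz' i with h2 | h2
    · have : (z i : ℝ) = (z' i : ℝ) := by linarith
      exact_mod_cast this
    · exact (hcase z hz hxz z' hz' hxz' i h1 h2).elim
    · exact (hcase z' hz' hxz' z hz hxz i h2 h1).elim
    · have : (z i : ℝ) = (z' i : ℝ) := by linarith
      exact_mod_cast this
  exact ⟨⟨z0, ⟨hz0Z, hxz0⟩, fun z' ⟨h1, h2⟩ => (huniq z0 hz0Z hxz0 z' h1 h2).symm⟩, hvert⟩
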